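/- Let V_R and V_B be finite disjoint sets of vectors in {0,1}^d, and define an equivalence relation on coordinates by i ~ j iff v[i] = v[j] for every v ∈ V_R ∪ V_B (i.e., the columns i and j of the data matrix are equal). Suppose c ∈ {0,1}^d satisfies δ(b,c) < δ(r,c) for every b ∈ V_B and r ∈ V_R, and suppose c' ∈ {0,1}^d satisfies |O(c') ∩ C| = |O(c) ∩ C| for every ~-equivalence class C of coordinates. Then c' also satisfies δ(b,c') < δ(r,c') for every b ∈ V_B and r ∈ V_R. -/
import Mathlib


/-- Exchange property behind the ILP-based FPT algorithm for BHC parameterized by the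
number of vectors: two coordinates `i, j` are equivalent if every data vector agrees on
them (equal columns); if `c` is a separating center and `c'` places the same number of
`1`'s inside every column-equivalence class as `c` does, then `c'` is also separating. -/
theorem column_class_exchange (d : ℕ) (VR VB : Finset (Fin d → Bool))
    (hdisj : Disjoint VR VB) (c c' : Fin d → Bool)
    (hsep : ∀ b ∈ VB, ∀ r ∈ VR, hammingDist b c < hammingDist r c)
    (hclass : ∀ j : Fin d,
      (Finset.univ.filter (fun i : Fin d =>
          (∀ v ∈ VR ∪ VB, v i = v j) ∧ c' i = true)).card =
      (Finset.univ.filter (fun i : Fin d =>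
          (∀ v ∈ VR ∪ VB, v i = v j) ∧ c i = true)).card) :
    ∀ b ∈ VB, ∀ r ∈ VR, hammingDist b c' < hammingDist r c' := by
  classical
  set F : Fin d → (↥(VR ∪ VB) → Bool) := fun i w => (w : Fin d → Bool) i with hF
  have hfiber : ∀ j : Fin d, (Finset.univ.filter (fun i => F i = F j)) =
      Finset.univ.filter (fun i => ∀ u ∈ VR ∪ VB, u i = u j) := by
    intro j
    ext i
    simp only [Finset.mem_filter, Finset.mem_univ, true_and]
    constructor
    · intro h u hu; exact congrFun h ⟨u, hu⟩
    · intro h; funext w; exact h w.1 w.2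
  -- number of ones of c and c' agree on every fiber
  have hones : ∀ j : Fin d,
      ((Finset.univ.filter (fun i => F i = F j)).filter (fun i => c' i = true)).card =
      ((Finset.univ.filter (fun i => F i = F j)).filter (fun i => c i = true)).card := by
    intro j
    rw [hfiber j, Finset.filter_filter, Finset.filter_filter]
    exact hclass j
  have key : ∀ v ∈ VR ∪ VB, hammingDist v c' = hammingDist v c := by
    intro v hv
    -- per-fiber mismatch counts agree
    have eqfib : ∀ j : Fin d,
        ((Finset.univ.filter (fun i => F i = F j)).filter (fun i => v i ≠ c' i)).card =
        ((Finset.univ.filter (fun i => F i = F j)).filter (fun i => v i ≠ c i)).card := by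
      intro j
      set s := Finset.univ.filter (fun i => F i = F j) with hs
      have hvconst : ∀ i ∈ s, v i = v j := by
        intro i hi
        have : F i = F j := (Finset.mem_filter.mp hi).2
        exact congrFun this ⟨v, hv⟩
      have hrw : ∀ x : Fin d → Bool,
          s.filter (fun i => v i ≠ x i) = s.filter (fun i => ¬ (x i = v j)) := by
        intro x
        apply Finset.filter_congr
        intro i hi
        rw [hvconst i hi]
        constructor
        · intro h h2; exact h h2.symm
        · intro h h2; exact h h2.symm
      rw [hrw c', hrw c]
      cases hvj : v j with
      | true =>
        have h1 := Finset.card_filter_add_card_filter_not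
          (s := s) (p := fun i => c' i = true)
        have h2 := Finset.card_filter_add_card_filter_not
          (s := s) (p := fun i => c i = true)
        have h3 := hones j
        rw [← hs] at h3
        omega
      | false =>
        simp only [hvj, Bool.not_eq_false]
        exact hones j
    have count : ∀ x : Fin d → Bool, hammingDist v x =
        ∑ y ∈ Finset.univ.image F,
          ((Finset.univ.filter (fun i => F i = y)).filter (fun i => v i ≠ x i)).card := by
      intro x
      rw [hammingDist]
      rw [Finset.card_eq_sum_card_fiberwise
        (f := F) (t := Finset.univ.image F)
        (fun i _ => Finset.mem_image_of_mem F (Finset.mem_univ i))]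
      apply Finset.sum_congr rfl
      intro y _
      congr 1
      rw [Finset.filter_filter, Finset.filter_filter]
      apply Finset.filter_congr
      intro i _
      exact and_comm
    rw [count c', count c]
    apply Finset.sum_congr rfl
    intro y hy
    obtain ⟨j, _, rfl⟩ := Finset.mem_image.mp hy
    exact eqfib j
  intro b hb r hr
  rw [key b (Finset.mem_union_right _ hb), key r (Finset.mem_union_left _ hr)]
  exact hsep b hb r hr
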